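/- Let ‖·‖ be any norm on ℝ^d and let x₁,…,xₙ ∈ ℝ^d satisfy ‖xᵢ‖ ≤ 1 for all i and Σᵢ xᵢ = 0. Then there exists a permutation π of [n] such that for every k ∈ [n], ‖Σ_{i=1}^k x_{π(i)}‖ ≤ d. -/

import Mathlib

open Finset

section SteinitzAux

variable {d n : ℕ} {N : (Fin d → ℝ) → ℝ}

private lemma steinitz_N_zero
    (hN_smul : ∀ (c : ℝ) (a : Fin d → ℝ), N (c • a) = |c| * N a) :
    N 0 = 0 := by
  have h := hN_smul 0 0
  simpa using h

private lemma steinitz_N_sum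
    (hN_add : ∀ a b : Fin d → ℝ, N (a + b) ≤ N a + N b)
    (hN_smul : ∀ (c : ℝ) (a : Fin d → ℝ), N (c • a) = |c| * N a)
    {ι : Type*} (s : Finset ι) (f : ι → (Fin d → ℝ)) :
    N (∑ i ∈ s, f i) ≤ ∑ i ∈ s, N (f i) := by
  classical
  induction s using Finset.induction_on with
  | empty => simp [steinitz_N_zero hN_smul]
  | insert _ _ h ih =>
      rw [Finset.sum_insert h, Finset.sum_insert h]
      exact le_trans (hN_add _ _) (by linarith)

/-- Core descent: a feasible coefficient vector with total mass `card - (d+1)`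
can be replaced by one vanishing somewhere on `A`. -/
private lemma steinitz_descent (x : Fin n → (Fin d → ℝ)) :
    ∀ (m : ℕ) (A : Finset (Fin n)) (μ : Fin n → ℝ),
      (A.filter (fun i => μ i < 1)).card ≤ m →
      (∀ i ∈ A, 0 ≤ μ i ∧ μ i ≤ 1) →
      (∑ i ∈ A, μ i) = (A.card : ℝ) - (d + 1) →
      (∑ i ∈ A, μ i • x i) = 0 →
      ∃ μ' : Fin n → ℝ,
        (∀ i ∈ A, 0 ≤ μ' i ∧ μ' i ≤ 1) ∧
        (∑ i ∈ A, μ' i) = (A.card : ℝ) - (d + 1) ∧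
        (∑ i ∈ A, μ' i • x i) = 0 ∧
        ∃ i ∈ A, μ' i = 0 := by
  intro m
  induction m with
  | zero =>
      intro A μ hcard h01 hs _hz
      exfalso
      have hfil : A.filter (fun i => μ i < 1) = ∅ :=
        Finset.card_eq_zero.mp (Nat.le_zero.mp hcard)
      have hall : ∀ i ∈ A, μ i = 1 := by
        intro i hi
        have : ¬ μ i < 1 := by
          intro hlt
          have : i ∈ A.filter (fun i => μ i < 1) := Finset.mem_filter.mpr ⟨hi, hlt⟩
          simp [hfil] at this
        exact le_antisymm (h01 i hi).2 (not_lt.mp this)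
      have : (∑ i ∈ A, μ i) = (A.card : ℝ) := by
        rw [Finset.sum_congr rfl hall]; simp
      rw [this] at hs
      have hd : (0:ℝ) ≤ (d:ℝ) := Nat.cast_nonneg d
      linarith
  | succ m ih =>
      intro A μ hcard h01 hs hz
      classical
      by_cases hz0 : ∃ i ∈ A, μ i = 0
      · exact ⟨μ, h01, hs, hz, hz0⟩
      push_neg at hz0
      have hpos : ∀ i ∈ A, 0 < μ i := fun i hi =>
        lt_of_le_of_ne (h01 i hi).1 (Ne.symm (hz0 i hi))
      set F := A.filter (fun i => μ i < 1) with hFdef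
      have hFA : F ⊆ A := Finset.filter_subset _ _
      have hone : ∀ i ∈ A, i ∉ F → μ i = 1 := by
        intro i hi hiF
        have : ¬ μ i < 1 := fun hlt => hiF (Finset.mem_filter.mpr ⟨hi, hlt⟩)
        exact le_antisymm (h01 i hi).2 (not_lt.mp this)
      have hsplit : (∑ i ∈ A \ F, μ i) + (∑ i ∈ F, μ i) = ∑ i ∈ A, μ i :=
        Finset.sum_sdiff hFA
      have hAF : (∑ i ∈ A \ F, μ i) = ((A.card - F.card : ℕ) : ℝ) := by
        have h1 : ∀ i ∈ A \ F, μ i = 1 := by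
          intro i hi
          rcases Finset.mem_sdiff.mp hi with ⟨hiA, hiF⟩
          exact hone i hiA hiF
        rw [Finset.sum_congr rfl h1]
        simp [Finset.card_sdiff_of_subset hFA]
      have hFsum : (∑ i ∈ F, μ i) = (F.card : ℝ) - (d + 1) := by
        have hFc : (F.card : ℕ) ≤ A.card := Finset.card_le_card hFA
        have : ((A.card - F.card : ℕ) : ℝ) = (A.card : ℝ) - (F.card : ℝ) := by
          push_cast [Nat.cast_sub hFc]; ring
        rw [this] at hAF
        linarith [hsplit.symm ▸ hs]
      -- F has at least d+2 elements
      have hFbig : d + 2 ≤ F.card := by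
        rcases Finset.eq_empty_or_nonempty F with hFe | hFne
        · exfalso
          rw [hFe] at hFsum
          simp at hFsum
          have hd : (0:ℝ) ≤ (d:ℝ) := Nat.cast_nonneg d
          linarith
        · have hFpos : (0:ℝ) < ∑ i ∈ F, μ i :=
            Finset.sum_pos (fun i hi => hpos i (hFA hi)) hFne
          have h1 : ((d + 1 : ℕ) : ℝ) < (F.card : ℝ) := by push_cast; linarith
          have h2 : (d + 1 : ℕ) < F.card := by exact_mod_cast h1
          omega
      -- linear dependence among the (x i, 1), i ∈ F
      have hnotli : ¬ LinearIndependent ℝ (fun i : ↥F => ((x i.1, (1:ℝ)) : (Fin d → ℝ) × ℝ)) := by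
        intro hli
        have hle := hli.fintype_card_le_finrank
        have hfr : Module.finrank ℝ ((Fin d → ℝ) × ℝ) = d + 1 := by
          simp [Module.finrank_prod, Module.finrank_fintype_fun_eq_card]
        rw [Fintype.card_coe, hfr] at hle
        omega
      obtain ⟨g, hg0, i₁, hgi₁⟩ := Fintype.not_linearIndependent_iff.mp hnotli
      set c : Fin n → ℝ := fun i => if h : i ∈ F then g ⟨i, h⟩ else 0 with hcdef
      have hcF0 : ∀ i, i ∉ F → c i = 0 := by
        intro i hi; simp [hcdef, dif_neg hi]
      have hcval : ∀ i : ↥F, c i.1 = g i := by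
        intro i; simp [hcdef, dif_pos i.2]
      have hcomp : (∑ i : ↥F, g i • x i.1) = 0 ∧ (∑ i : ↥F, g i) = 0 := by
        have h1 := congrArg Prod.fst hg0
        have h2 := congrArg Prod.snd hg0
        simp only [Prod.fst_sum, Prod.snd_sum, Prod.smul_mk, Prod.fst_zero, Prod.snd_zero,
          smul_eq_mul, mul_one] at h1 h2
        exact ⟨h1, h2⟩
      have hcsum : (∑ i ∈ F, c i) = 0 := by
        rw [← Finset.sum_attach F c]
        rw [show (∑ i ∈ F.attach, c i.1) = ∑ i ∈ F.attach, g i from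
          Finset.sum_congr rfl (fun i _ => hcval i)]
        rw [← Finset.univ_eq_attach]
        exact hcomp.2
      have hcx : (∑ i ∈ F, c i • x i) = 0 := by
        rw [← Finset.sum_attach F (fun i => c i • x i)]
        rw [show (∑ i ∈ F.attach, c i.1 • x i.1) = ∑ i ∈ F.attach, g i • x i.1 from
          Finset.sum_congr rfl (fun i _ => by rw [hcval i])]
        rw [← Finset.univ_eq_attach]
        exact hcomp.1
      have hcA : (∑ i ∈ A, c i) = 0 := by
        rw [← Finset.sum_subset hFA (fun i _ hi => hcF0 i hi)]
        exact hcsum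
      have hcxA : (∑ i ∈ A, c i • x i) = 0 := by
        rw [← Finset.sum_subset hFA (fun i _ hi => by rw [hcF0 i hi, zero_smul])]
        exact hcx
      have hine : ∃ i ∈ F, c i ≠ 0 := ⟨i₁.1, i₁.2, by rw [hcval i₁]; exact hgi₁⟩
      -- both signs occur
      have hPne : (F.filter (fun i => 0 < c i)).Nonempty := by
        by_contra h
        rw [Finset.not_nonempty_iff_eq_empty, Finset.filter_eq_empty_iff] at h
        have hall : ∀ i ∈ F, c i = 0 :=
          (Finset.sum_eq_zero_iff_of_nonpos (fun i hi => not_lt.mp (h hi))).mp hcsum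
        obtain ⟨j, hj, hcj⟩ := hine
        exact hcj (hall j hj)
      have hNne : (F.filter (fun i => c i < 0)).Nonempty := by
        by_contra h
        rw [Finset.not_nonempty_iff_eq_empty, Finset.filter_eq_empty_iff] at h
        have hall : ∀ i ∈ F, c i = 0 :=
          (Finset.sum_eq_zero_iff_of_nonneg (fun i hi => not_lt.mp (h hi))).mp hcsum
        obtain ⟨j, hj, hcj⟩ := hine
        exact hcj (hall j hj)
      set T := F.filter (fun i => c i ≠ 0) with hTdef
      have hTne : T.Nonempty := by
        obtain ⟨j, hj, hcj⟩ := hine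
        exact ⟨j, Finset.mem_filter.mpr ⟨hj, hcj⟩⟩
      set r : Fin n → ℝ := fun i => if 0 < c i then (1 - μ i) / c i else μ i / (-c i) with hrdef
      obtain ⟨i₀, hi₀T, hmin⟩ := Finset.exists_min_image T r hTne
      have hi₀F : i₀ ∈ F := (Finset.mem_filter.mp hi₀T).1
      have hi₀A : i₀ ∈ A := hFA hi₀F
      have hci₀ : c i₀ ≠ 0 := (Finset.mem_filter.mp hi₀T).2
      set t := r i₀ with htdef
      have hrpos : ∀ j ∈ T, 0 < r j := by
        intro j hj
        have hjF : j ∈ F := (Finset.mem_filter.mp hj).1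
        have hjA : j ∈ A := hFA hjF
        have hμlt : μ j < 1 := (Finset.mem_filter.mp hjF).2
        have hμpos : 0 < μ j := hpos j hjA
        rcases lt_or_gt_of_ne ((Finset.mem_filter.mp hj).2) with hneg | hposj
        · rw [hrdef]
          simp only [not_lt.mpr (le_of_lt hneg), if_neg (not_lt.mpr (le_of_lt hneg))]
          exact div_pos hμpos (by linarith)
        · rw [hrdef]
          simp only [if_pos hposj]
          exact div_pos (by linarith) hposj
      have htpos : 0 < t := hrpos i₀ hi₀T
      set μ' : Fin n → ℝ := fun i => μ i + t * c i with hμ'def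
      have hbounds : ∀ j ∈ A, 0 ≤ μ' j ∧ μ' j ≤ 1 := by
        intro j hjA
        by_cases hjF : j ∈ F
        · by_cases hcj : c j = 0
          · simp [hμ'def, hcj]; exact h01 j hjA
          · have hjT : j ∈ T := Finset.mem_filter.mpr ⟨hjF, hcj⟩
            have hμlt : μ j < 1 := (Finset.mem_filter.mp hjF).2
            have hμpos : 0 < μ j := hpos j hjA
            have htle := hmin j hjT
            rcases lt_or_gt_of_ne hcj with hneg | hposj
            · -- c j < 0
              have hrj : r j = μ j / (-c j) := by
                rw [hrdef]; simp [not_lt.mpr (le_of_lt hneg)]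
              rw [hrj] at htle
              have h1 : t * (-c j) ≤ μ j := by
                rw [← le_div_iff₀ (by linarith : (0:ℝ) < -c j)]
                exact htle
              constructor
              · simp only [hμ'def]; nlinarith
              · simp only [hμ'def]; nlinarith
            · -- 0 < c j
              have hrj : r j = (1 - μ j) / c j := by rw [hrdef]; simp [hposj]
              rw [hrj] at htle
              have h1 : t * c j ≤ 1 - μ j := by
                rw [← le_div_iff₀ hposj]; exact htle
              constructor
              · simp only [hμ'def]; nlinarith
              · simp only [hμ'def]; linarith
        · have hcj := hcF0 j hjF
          simp [hμ'def, hcj]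
          exact h01 j hjA
      have hsum' : (∑ i ∈ A, μ' i) = (A.card : ℝ) - (d + 1) := by
        simp only [hμ'def]
        rw [Finset.sum_add_distrib, ← Finset.mul_sum, hcA, mul_zero, add_zero]
        exact hs
      have hzx' : (∑ i ∈ A, μ' i • x i) = 0 := by
        simp only [hμ'def]
        have : ∀ i ∈ A, (μ i + t * c i) • x i = μ i • x i + t • (c i • x i) := by
          intro i _; rw [add_smul, mul_smul]
        rw [Finset.sum_congr rfl this, Finset.sum_add_distrib, ← Finset.smul_sum, hcxA,
          smul_zero, add_zero]
        exact hz
      rcases lt_or_gt_of_ne hci₀ with hneg | hposc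
      · -- μ' i₀ = 0 : done
        have hri₀ : t = μ i₀ / (-c i₀) := by
          rw [htdef, hrdef]; simp [not_lt.mpr (le_of_lt hneg)]
        have hμ'i₀ : μ' i₀ = 0 := by
          simp only [hμ'def, hri₀]
          have h1 : c i₀ / -c i₀ = -1 := by rw [div_neg, div_self hci₀]
          rw [div_mul_eq_mul_div, mul_div_assoc, h1]
          ring
        exact ⟨μ', hbounds, hsum', hzx', i₀, hi₀A, hμ'i₀⟩
      · -- μ' i₀ = 1 : recurse
        have hri₀ : t = (1 - μ i₀) / c i₀ := by
          rw [htdef, hrdef]; simp [hposc]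
        have hμ'i₀ : μ' i₀ = 1 := by
          simp only [hμ'def, hri₀]
          rw [div_mul_cancel₀ _ hci₀]
          ring
        have hsub : A.filter (fun i => μ' i < 1) ⊆ F.erase i₀ := by
          intro i hi
          rcases Finset.mem_filter.mp hi with ⟨hiA, hilt⟩
          have hiF : i ∈ F := by
            by_contra hiF
            have h1 : μ i = 1 := hone i hiA hiF
            have h2 : c i = 0 := hcF0 i hiF
            rw [hμ'def] at hilt
            simp [h1, h2] at hilt
          refine Finset.mem_erase.mpr ⟨?_, hiF⟩
          intro hie
          rw [hie] at hilt
          rw [hμ'i₀] at hilt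
          exact lt_irrefl 1 hilt
        have hcard' : (A.filter (fun i => μ' i < 1)).card ≤ m := by
          have h1 : (A.filter (fun i => μ' i < 1)).card ≤ (F.erase i₀).card :=
            Finset.card_le_card hsub
          have h2 : (F.erase i₀).card = F.card - 1 := Finset.card_erase_of_mem hi₀F
          omega
        exact ih A μ' hcard' hbounds hsum' hzx'

/-- Build enumerations with bounded prefix sums, by strong induction. -/
private lemma steinitz_build
    (hN_add : ∀ a b : Fin d → ℝ, N (a + b) ≤ N a + N b)
    (hN_smul : ∀ (c : ℝ) (a : Fin d → ℝ), N (c • a) = |c| * N a)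
    (x : Fin n → (Fin d → ℝ)) (hx : ∀ i, N (x i) ≤ 1) (hn : 0 < n) :
    ∀ (k : ℕ) (A : Finset (Fin n)), A.card = k →
      (k ≤ d ∨ ∃ lam : Fin n → ℝ, (∀ i ∈ A, 0 ≤ lam i ∧ lam i ≤ 1) ∧
        (∑ i ∈ A, lam i) = (k : ℝ) - d ∧ (∑ i ∈ A, lam i • x i) = 0) →
      ∃ f : ℕ → Fin n, (∀ j1 < k, ∀ j2 < k, f j1 = f j2 → j1 = j2) ∧
        (Finset.range k).image f = A ∧
        ∀ m ≤ k, N (∑ j ∈ Finset.range m, x (f j)) ≤ (d : ℝ) := by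
  classical
  intro k
  induction k using Nat.strong_induction_on with
  | _ k ih =>
  intro A hA hgood
  by_cases hk : k ≤ d
  · -- trivial case: any enumeration works
    set e := A.orderIsoOfFin hA with hedef
    refine ⟨fun j => if hj : j < k then (e ⟨j, hj⟩ : Fin n) else ⟨0, hn⟩, ?_, ?_, ?_⟩
    · intro j1 hj1 j2 hj2 heq
      simp only [dif_pos hj1, dif_pos hj2] at heq
      have := e.injective (Subtype.ext heq)
      exact Fin.mk.inj_iff.mp this
    · ext a
      simp only [Finset.mem_image, Finset.mem_range]
      constructor
      · rintro ⟨j, hj, rfl⟩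
        simp only [dif_pos hj]
        exact (e ⟨j, hj⟩).2
      · intro ha
        obtain ⟨j, hj⟩ := e.surjective ⟨a, ha⟩
        exact ⟨j.1, j.2, by simp only [dif_pos j.2]; rw [show (⟨j.1, j.2⟩ : Fin k) = j from rfl, hj]⟩
    · intro m hm
      calc N (∑ j ∈ Finset.range m, x (if hj : j < k then (e ⟨j, hj⟩ : Fin n) else ⟨0, hn⟩))
          ≤ ∑ j ∈ Finset.range m, N (x (if hj : j < k then (e ⟨j, hj⟩ : Fin n) else ⟨0, hn⟩)) :=
            steinitz_N_sum hN_add hN_smul _ _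
        _ ≤ ∑ _j ∈ Finset.range m, (1:ℝ) := Finset.sum_le_sum (fun j _ => hx _)
        _ = (m : ℝ) := by simp
        _ ≤ (d : ℝ) := by exact_mod_cast le_trans hm hk
  · -- main case: k > d
    push_neg at hk
    rcases hgood with hgood | ⟨lam, hlam01, hlamsum, hlamx⟩
    · omega
    have hk1 : 1 ≤ k := by omega
    obtain ⟨p, rfl⟩ : ∃ p, k = p + 1 := ⟨k - 1, by omega⟩
    have hkd : (0:ℝ) < ((p+1):ℝ) - d := by
      have : (d:ℝ) < ((p+1):ℝ) := by exact_mod_cast hk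
      linarith
    -- rescale lam to mass p-d
    set s : ℝ := (((p+1):ℝ) - 1 - d) / (((p+1):ℝ) - d) with hsdef
    have hs0 : 0 ≤ s := by
      apply div_nonneg _ (le_of_lt hkd)
      have : (d:ℝ) + 1 ≤ ((p+1):ℝ) := by exact_mod_cast hk
      linarith
    have hs1 : s ≤ 1 := by
      rw [hsdef, div_le_one hkd]; linarith
    set μ : Fin n → ℝ := fun i => s * lam i with hμdef
    have hμ01 : ∀ i ∈ A, 0 ≤ μ i ∧ μ i ≤ 1 := by
      intro i hi
      obtain ⟨h1, h2⟩ := hlam01 i hi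
      constructor
      · exact mul_nonneg hs0 h1
      · calc s * lam i ≤ 1 * 1 := by
              apply mul_le_mul hs1 h2 h1 zero_le_one
          _ = 1 := by ring
    have hμsum : (∑ i ∈ A, μ i) = (A.card : ℝ) - (d + 1) := by
      simp only [hμdef]
      rw [← Finset.mul_sum, hlamsum, hA, hsdef]
      have hne : ((p:ℝ) + 1) - d ≠ 0 := by push_cast at hkd; linarith
      push_cast
      field_simp
      ring
    have hμx : (∑ i ∈ A, μ i • x i) = 0 := by
      simp only [hμdef]
      have : ∀ i ∈ A, (s * lam i) • x i = s • (lam i • x i) := fun i _ => mul_smul s (lam i) (x i)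
      rw [Finset.sum_congr rfl this, ← Finset.smul_sum, hlamx, smul_zero]
    obtain ⟨μ', hμ'01, hμ'sum, hμ'x, i₀, hi₀A, hμ'i₀⟩ :=
      steinitz_descent x (A.filter (fun i => μ i < 1)).card A μ le_rfl hμ01 hμsum hμx
    set A' := A.erase i₀ with hA'def
    have hA'card : A'.card = p := by
      rw [hA'def, Finset.card_erase_of_mem hi₀A, hA]
      omega
    have hA'sub : A' ⊆ A := Finset.erase_subset _ _
    have hsum'A' : (∑ i ∈ A', μ' i) = ((p : ℕ) : ℝ) - d := by
      rw [hA'def, Finset.sum_erase _ hμ'i₀, hμ'sum, hA]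
      push_cast
      ring
    have hx'A' : (∑ i ∈ A', μ' i • x i) = 0 := by
      rw [hA'def, Finset.sum_erase _ (by rw [hμ'i₀, zero_smul]), hμ'x]
    obtain ⟨f, hfinj, hfimg, hfpre⟩ := ih (p) (by omega) A' hA'card
      (Or.inr ⟨μ', fun i hi => hμ'01 i (hA'sub hi), hsum'A', hx'A'⟩)
    set f' : ℕ → Fin n := fun j => if j = p then i₀ else f j with hf'def
    have hfmem : ∀ j < p, f j ∈ A' := by
      intro j hj
      rw [← hfimg]
      exact Finset.mem_image_of_mem f (Finset.mem_range.mpr hj)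
    have hfne : ∀ j < p, f j ≠ i₀ := fun j hj => Finset.ne_of_mem_erase (hfmem j hj)
    refine ⟨f', ?_, ?_, ?_⟩
    · intro j1 hj1 j2 hj2 heq
      by_cases h1 : j1 = p <;> by_cases h2 : j2 = p
      · omega
      · exfalso
        rw [hf'def] at heq
        simp only [if_pos h1, if_neg h2] at heq
        exact hfne j2 (by omega) heq.symm
      · exfalso
        rw [hf'def] at heq
        simp only [if_neg h1, if_pos h2] at heq
        exact hfne j1 (by omega) heq
      · rw [hf'def] at heq
        simp only [if_neg h1, if_neg h2] at heq
        exact hfinj j1 (by omega) j2 (by omega) heq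
    · have hrk : Finset.range (p+1) = insert p (Finset.range p) := Finset.range_add_one
      rw [hrk, Finset.image_insert]
      have h1 : f' (p) = i₀ := by rw [hf'def]; simp
      have h2 : (Finset.range (p)).image f' = (Finset.range (p)).image f := by
        apply Finset.image_congr
        intro j hj
        simp only [Finset.coe_range, Set.mem_Iio] at hj
        rw [hf'def]; simp only [if_neg (by omega : ¬ j = p)]
      rw [h1, h2, hfimg, hA'def, Finset.insert_erase hi₀A]
    · intro m hm
      by_cases hmk : m ≤ p
      · have : (∑ j ∈ Finset.range m, x (f' j)) = ∑ j ∈ Finset.range m, x (f j) := by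
          apply Finset.sum_congr rfl
          intro j hj
          rw [Finset.mem_range] at hj
          rw [hf'def]; simp only [if_neg (by omega : ¬ j = p)]
        rw [this]
        exact hfpre m hmk
      · obtain rfl : m = p + 1 := by omega
        have hrk : Finset.range (p+1) = insert p (Finset.range p) := Finset.range_add_one
        have hsplit : (∑ j ∈ Finset.range (p+1), x (f' j))
            = x i₀ + ∑ j ∈ Finset.range (p), x (f' j) := by
          rw [hrk, Finset.sum_insert (by simp)]
          congr 1
          rw [hf'def]; simp
        have hagree : (∑ j ∈ Finset.range (p), x (f' j))
            = ∑ j ∈ Finset.range (p), x (f j) := by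
          apply Finset.sum_congr rfl
          intro j hj
          rw [Finset.mem_range] at hj
          rw [hf'def]; simp only [if_neg (by omega : ¬ j = p)]
        have himg : (∑ j ∈ Finset.range (p), x (f j)) = ∑ i ∈ A', x i := by
          rw [← hfimg]
          rw [Finset.sum_image]
          intro a ha b hb hab
          exact hfinj a (Finset.mem_range.mp ha) b (Finset.mem_range.mp hb) hab
        have hfull : (∑ j ∈ Finset.range (p+1), x (f' j)) = ∑ i ∈ A, x i := by
          rw [hsplit, hagree, himg, hA'def, ← Finset.add_sum_erase A x hi₀A]
        rw [hfull]
        -- bound ‖∑_A x‖ ≤ d via lam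
        have hrw : (∑ i ∈ A, x i) = ∑ i ∈ A, (1 - lam i) • x i := by
          have : ∀ i ∈ A, (1 - lam i) • x i = x i - lam i • x i := by
            intro i _; rw [sub_smul, one_smul]
          rw [Finset.sum_congr rfl this, Finset.sum_sub_distrib, hlamx, sub_zero]
        rw [hrw]
        calc N (∑ i ∈ A, (1 - lam i) • x i)
            ≤ ∑ i ∈ A, N ((1 - lam i) • x i) := steinitz_N_sum hN_add hN_smul _ _
          _ = ∑ i ∈ A, (1 - lam i) * N (x i) := by
              apply Finset.sum_congr rfl
              intro i hi
              rw [hN_smul, abs_of_nonneg (by linarith [(hlam01 i hi).2])]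
          _ ≤ ∑ i ∈ A, (1 - lam i) := by
              apply Finset.sum_le_sum
              intro i hi
              have h1 : 0 ≤ 1 - lam i := by linarith [(hlam01 i hi).2]
              calc (1 - lam i) * N (x i) ≤ (1 - lam i) * 1 :=
                    mul_le_mul_of_nonneg_left (hx i) h1
                _ = 1 - lam i := by ring
          _ = (d : ℝ) := by
              rw [Finset.sum_sub_distrib, hlamsum, Finset.sum_const, hA, nsmul_eq_mul, mul_one]
              push_cast
              ring

end SteinitzAux

/-- Steinitz Lemma (Sevastjanov–Banaszczyk bound `d`): for any norm `N` on `ℝ^d`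
and vectors `x₁,…,xₙ` of norm at most 1 summing to zero, there is a permutation
whose every prefix sum has norm at most `d`. -/
theorem steinitz_lemma (d n : ℕ) (N : (Fin d → ℝ) → ℝ)
    (hN_add : ∀ a b : Fin d → ℝ, N (a + b) ≤ N a + N b)
    (hN_smul : ∀ (c : ℝ) (a : Fin d → ℝ), N (c • a) = |c| * N a)
    (x : Fin n → (Fin d → ℝ))
    (hx : ∀ i, N (x i) ≤ 1) (hsum : ∑ i, x i = 0) :
    ∃ π : Equiv.Perm (Fin n), ∀ k : Fin n,
      N (∑ i ∈ Finset.univ.filter (fun i => i ≤ k), x (π i)) ≤ d := by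
  classical
  rcases Nat.eq_zero_or_pos n with hn0 | hn
  · subst hn0
    exact ⟨1, fun k => k.elim0⟩
  have hcarduniv : (Finset.univ : Finset (Fin n)).card = n := by simp
  have hgood : n ≤ d ∨ ∃ lam : Fin n → ℝ,
      (∀ i ∈ (Finset.univ : Finset (Fin n)), 0 ≤ lam i ∧ lam i ≤ 1) ∧
      (∑ i ∈ (Finset.univ : Finset (Fin n)), lam i) = (n : ℝ) - d ∧
      (∑ i ∈ (Finset.univ : Finset (Fin n)), lam i • x i) = 0 := by
    by_cases hnd : n ≤ d
    · exact Or.inl hnd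
    · push_neg at hnd
      have hnpos : (0:ℝ) < (n:ℝ) := by exact_mod_cast hn
      refine Or.inr ⟨fun _ => ((n:ℝ) - d) / n, fun i _ => ⟨?_, ?_⟩, ?_, ?_⟩
      · apply div_nonneg _ (le_of_lt hnpos)
        have : (d:ℝ) < (n:ℝ) := by exact_mod_cast hnd
        linarith
      · rw [div_le_one hnpos]
        have hd : (0:ℝ) ≤ (d:ℝ) := Nat.cast_nonneg d
        linarith
      · rw [Finset.sum_const, hcarduniv, nsmul_eq_mul, mul_div_cancel₀ _ (ne_of_gt hnpos)]
      · have : ∀ i ∈ (Finset.univ : Finset (Fin n)),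
            (((n:ℝ) - d) / n) • x i = (((n:ℝ) - d) / n) • x i := fun _ _ => rfl
        rw [← Finset.smul_sum, hsum, smul_zero]
  obtain ⟨f, hfinj, hfimg, hfpre⟩ :=
    steinitz_build hN_add hN_smul x hx hn n Finset.univ hcarduniv hgood
  have hginj : Function.Injective (fun i : Fin n => f i.1) := by
    intro a b hab
    exact Fin.ext (hfinj a.1 a.2 b.1 b.2 hab)
  set π : Equiv.Perm (Fin n) :=
    Equiv.ofBijective _ ((Finite.injective_iff_bijective).mp hginj) with hπ
  refine ⟨π, fun k => ?_⟩
  have hπapp : ∀ i : Fin n, π i = f i.1 := fun i => rfl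
  have hsum_eq : (∑ i ∈ Finset.univ.filter (fun i => i ≤ k), x (π i))
      = ∑ j ∈ Finset.range (k.1 + 1), x (f j) := by
    rw [Finset.sum_congr rfl (fun i _ => by rw [hπapp])]
    apply Finset.sum_nbij' (fun i => i.1) (fun j => if h : j < n then ⟨j, h⟩ else k)
    · intro a ha
      rw [Finset.mem_filter] at ha
      rw [Finset.mem_range]
      have : a.1 ≤ k.1 := ha.2
      omega
    · intro j hj
      rw [Finset.mem_range] at hj
      have hjn : j < n := lt_of_lt_of_le hj k.2
      rw [dif_pos hjn]
      rw [Finset.mem_filter]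
      exact ⟨Finset.mem_univ _, by exact Fin.mk_le_of_le_val (by omega)⟩
    · intro a ha
      rw [Finset.mem_filter] at ha
      have : a.1 < n := a.2
      simp [this]
    · intro j hj
      rw [Finset.mem_range] at hj
      have hjn : j < n := lt_of_lt_of_le hj k.2
      rw [dif_pos hjn]
    · intro a ha
      rfl
  rw [hsum_eq]
  exact hfpre (k.1 + 1) k.2
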